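/- Let O be a viable set of size at most k in a directed acyclic graph D whose truncated depth is d (the minimum of k and the length, in number of vertices, of a longest path ending in a sink). For any integer p with 1 ≤ p ≤ k, there exist ⌈k/p⌉ pairs (O_1,B_1),…,(O_{⌈k/p⌉},B_{⌈k/p⌉}) such that O = ⋃_i O_i, the sets O_i are pairwise disjoint, each O_i ∪ B_i is viable, |O_i| ≤ p, |B_i| ≤ d−1, and Σ_i |O_i ∪ B_i| ≤ (k/p)·(p+d−1). -/

import Mathlib

open scoped Classical

/-- A sink of the directed graph `E`: a vertex with no outgoing edges. -/
def IsSink {X : Type*} (E : X → X → Prop) (x : X) : Prop := ∀ y, ¬ E x y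

/-- A set `S` is viable if each of its members is a sink or has an
out-neighbor in `S`. -/
def Viable {X : Type*} (E : X → X → Prop) (S : Finset X) : Prop :=
  ∀ s ∈ S, IsSink E s ∨ ∃ s' ∈ S, E s s'

section Stage1

variable {X : Type*} [Fintype X] [DecidableEq X] {E : X → X → Prop}

/-- Stage 1: existence of ancestor-chain system. -/
lemma exists_chain_system
    (hacyc : ∀ x, ¬ Relation.TransGen E x x)
    (k d : ℕ)
    (hdepth : ∀ l : List X, l.Chain' E →
      (∃ x, l.getLast? = some x ∧ IsSink E x) → min k l.length ≤ d)
    (O : Finset X) (hOviable : Viable E O) (hOcard : O.card ≤ k) :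
    ∃ (f : X → X) (chain : X → List X),
      (∀ x, x ∈ O → f x ∈ O ∧ (¬ IsSink E x → E x (f x))) ∧
      (∀ x, ∃ t, chain x = x :: t) ∧
      (∀ x, x ∈ O →
        (∀ y ∈ chain x, y ∈ O) ∧
        (chain x).length ≤ d ∧
        (¬ IsSink E x → f x ∈ (chain x).tail) ∧
        (∀ b ∈ (chain x).tail, b ≠ x ∧ b ∈ O ∧
          (chain b).reverse <+: (chain x).reverse ∧
          (¬ IsSink E b → f b ∈ (chain x).tail))) := by
  classical
  -- successor function
  have hstep : ∀ x, x ∈ O → ¬ IsSink E x → ∃ y, y ∈ O ∧ E x y := by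
    intro x hx hs
    rcases hOviable x hx with h | ⟨y, hy, hxy⟩
    · exact absurd h hs
    · exact ⟨y, hy, hxy⟩
  obtain ⟨f, hf⟩ : ∃ f : X → X, ∀ x, x ∈ O → f x ∈ O ∧ (¬ IsSink E x → E x (f x)) := by
    refine ⟨fun x => if h : x ∈ O ∧ ¬ IsSink E x then (hstep x h.1 h.2).choose else x, ?_⟩
    intro x hx
    by_cases h : x ∈ O ∧ ¬ IsSink E x
    · simp only [dif_pos h]
      exact ⟨(hstep x h.1 h.2).choose_spec.1, fun _ => (hstep x h.1 h.2).choose_spec.2⟩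
    · simp only [dif_neg h]
      exact ⟨hx, fun hs => absurd ⟨hx, hs⟩ h⟩
  have hfO : ∀ x, x ∈ O → f x ∈ O := fun x hx => (hf x hx).1
  have hfE : ∀ x, x ∈ O → ¬ IsSink E x → E x (f x) := fun x hx => (hf x hx).2
  have hiterO : ∀ x, x ∈ O → ∀ m, f^[m] x ∈ O := by
    intro x hx m
    induction m with
    | zero => simpa using hx
    | succ m ih => rw [Function.iterate_succ_apply']; exact hfO _ ih
  have hiterE : ∀ x, x ∈ O → ∀ m, ¬ IsSink E (f^[m] x) → E (f^[m] x) (f^[m + 1] x) := by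
    intro x hx m hs
    rw [Function.iterate_succ_apply']
    exact hfE _ (hiterO x hx m) hs
  have htg : ∀ x, x ∈ O → ∀ i j, i < j → (∀ m, i ≤ m → m < j → ¬ IsSink E (f^[m] x)) →
      Relation.TransGen E (f^[i] x) (f^[j] x) := by
    intro x hx i j
    induction j with
    | zero => omega
    | succ j ih =>
      intro hij hns
      rcases Nat.lt_or_ge i j with h | h
      · exact Relation.TransGen.tail (ih h (fun m h1 h2 => hns m h1 (by omega)))
          (hiterE x hx j (hns j (by omega) (by omega)))
      · have hij' : i = j := by omega
        subst hij'
        exact Relation.TransGen.single (hiterE x hx i (hns i le_rfl (by omega)))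
  have hsinkex : ∀ x, x ∈ O → ∃ m, IsSink E (f^[m] x) := by
    intro x hx
    by_contra hno
    push_neg at hno
    obtain ⟨i, j, hij, heq⟩ := Finite.exists_ne_map_eq_of_infinite (fun m : ℕ => f^[m] x)
    rcases hij.lt_or_gt with h | h
    · have := htg x hx i j h (fun m _ _ => hno m)
      rw [heq] at this
      exact hacyc _ this
    · have := htg x hx j i h (fun m _ _ => hno m)
      rw [heq] at this
      exact hacyc _ this
  obtain ⟨m0, hm0⟩ : ∃ m0 : X → ℕ, ∀ x, x ∈ O →
      IsSink E (f^[m0 x] x) ∧ ∀ j, j < m0 x → ¬ IsSink E (f^[j] x) := by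
    refine ⟨fun x => if h : ∃ m, IsSink E (f^[m] x) then Nat.find h else 0, ?_⟩
    intro x hx
    have h := hsinkex x hx
    simp only [dif_pos h]
    exact ⟨Nat.find_spec h, fun j hj => Nat.find_min h hj⟩
  have hm0sink : ∀ x, x ∈ O → IsSink E (f^[m0 x] x) := fun x hx => (hm0 x hx).1
  have hm0min : ∀ x, x ∈ O → ∀ j, j < m0 x → ¬ IsSink E (f^[j] x) := fun x hx => (hm0 x hx).2
  -- iterates distinct up to m0
  have hinj : ∀ x, x ∈ O → ∀ i j, i ≤ m0 x → j ≤ m0 x → f^[i] x = f^[j] x → i = j := by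
    intro x hx i j hi hj heq
    by_contra hne
    rcases Nat.lt_or_ge i j with h | h
    · have := htg x hx i j h (fun m _ hm => hm0min x hx m (by omega))
      rw [heq] at this
      exact hacyc _ this
    · have h' : j < i := by omega
      have := htg x hx j i h' (fun m _ hm => hm0min x hx m (by omega))
      rw [← heq] at this
      exact hacyc _ this
  -- m0 shift
  have hm0shift : ∀ x, x ∈ O → ∀ j, j ≤ m0 x → m0 (f^[j] x) = m0 x - j := by
    intro x hx j hj
    have hbO : f^[j] x ∈ O := hiterO x hx j
    have hsink2 : IsSink E (f^[m0 x - j] (f^[j] x)) := by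
      rw [← Function.iterate_add_apply]
      have : m0 x - j + j = m0 x := by omega
      rw [this]
      exact hm0sink x hx
    rcases Nat.lt_trichotomy (m0 (f^[j] x)) (m0 x - j) with h | h | h
    · exfalso
      have hs := hm0sink _ hbO
      rw [← Function.iterate_add_apply] at hs
      exact hm0min x hx (m0 (f^[j] x) + j) (by omega) hs
    · exact h
    · exact absurd hsink2 (hm0min _ hbO _ h)
  -- chain system
  have hlen : ∀ y : X, ((List.range (m0 y + 1)).map (fun j => f^[j] y)).length = m0 y + 1 := by
    simp
  have hmemc : ∀ y z : X, z ∈ (List.range (m0 y + 1)).map (fun j => f^[j] y) ↔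
      ∃ j, j ≤ m0 y ∧ f^[j] y = z := by
    intro y z
    simp only [List.mem_map, List.mem_range, Nat.lt_succ_iff]
  have hhead : ∀ y : X, (List.range (m0 y + 1)).map (fun j => f^[j] y) =
      y :: (List.range (m0 y)).map (fun j => f^[j + 1] y) := by
    intro y
    rw [List.range_succ_eq_map, List.map_cons, List.map_map]
    simp [Function.comp_def]
  have htailc : ∀ y : X, ((List.range (m0 y + 1)).map (fun j => f^[j] y)).tail =
      (List.range (m0 y)).map (fun j => f^[j + 1] y) := by
    intro y
    rw [hhead]
    rfl
  have hmemtail : ∀ y z : X, z ∈ ((List.range (m0 y + 1)).map (fun j => f^[j] y)).tail ↔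
      ∃ j, j < m0 y ∧ f^[j + 1] y = z := by
    intro y z
    rw [htailc]
    simp only [List.mem_map, List.mem_range]
  have hnodup : ∀ x, x ∈ O → ((List.range (m0 x + 1)).map (fun j => f^[j] x)).Nodup := by
    intro x hx
    refine List.Nodup.map_on ?_ List.nodup_range
    intro i hi j hj heq
    simp only [List.mem_range, Nat.lt_succ_iff] at hi hj
    exact hinj x hx i j hi hj heq
  have hmain : ∀ x, x ∈ O →
      (∀ y ∈ (List.range (m0 x + 1)).map (fun j => f^[j] x), y ∈ O) ∧
      ((List.range (m0 x + 1)).map (fun j => f^[j] x)).length ≤ d ∧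
      (¬ IsSink E x → f x ∈ ((List.range (m0 x + 1)).map (fun j => f^[j] x)).tail) ∧
      (∀ b ∈ ((List.range (m0 x + 1)).map (fun j => f^[j] x)).tail, b ≠ x ∧ b ∈ O ∧
        ((List.range (m0 b + 1)).map (fun j => f^[j] b)).reverse <+:
          ((List.range (m0 x + 1)).map (fun j => f^[j] x)).reverse ∧
        (¬ IsSink E b → f b ∈ ((List.range (m0 x + 1)).map (fun j => f^[j] x)).tail)) := by
    intro x hx
    have hmem : ∀ y ∈ (List.range (m0 x + 1)).map (fun j => f^[j] x), y ∈ O := by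
      intro y hy
      rw [hmemc] at hy
      obtain ⟨j, _, rfl⟩ := hy
      exact hiterO x hx j
    have hlenk : m0 x + 1 ≤ k := by
      have hsub : ((List.range (m0 x + 1)).map (fun j => f^[j] x)).toFinset ⊆ O := by
        intro z hz
        exact hmem z (List.mem_toFinset.mp hz)
      have hcc := Finset.card_le_card hsub
      rw [List.toFinset_card_of_nodup (hnodup x hx), hlen] at hcc
      omega
    have hchain' : List.Chain' E ((List.range (m0 x + 1)).map (fun j => f^[j] x)) := by
      show List.IsChain E _
      rw [List.isChain_map]
      have := List.isChain_range_succ (fun a b => E (f^[a] x) (f^[b] x)) (m0 x)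
      rw [this]
      intro m hm
      exact hiterE x hx m (hm0min x hx m hm)
    have hne : (List.range (m0 x + 1)).map (fun j => f^[j] x) ≠ [] := by
      rw [hhead]
      simp
    have hlast : ∃ z, ((List.range (m0 x + 1)).map (fun j => f^[j] x)).getLast? = some z ∧
        IsSink E z := by
      refine ⟨f^[m0 x] x, ?_, hm0sink x hx⟩
      rw [List.getLast?_eq_getLast hne, List.getLast_eq_getElem]
      congr 1
      simp only [List.getElem_map, List.getElem_range, hlen, Nat.add_sub_cancel]
    have hld : m0 x + 1 ≤ d := by
      have := hdepth _ hchain' hlast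
      rw [hlen] at this
      omega
    refine ⟨hmem, by rw [hlen]; exact hld, ?_, ?_⟩
    · intro hs
      have hm0ne : m0 x ≠ 0 := by
        intro h0
        have := hm0sink x hx
        rw [h0, Function.iterate_zero_apply] at this
        exact hs this
      rw [hmemtail]
      exact ⟨0, by omega, by simp⟩
    · intro b hb
      rw [hmemtail] at hb
      obtain ⟨j, hj, rfl⟩ := hb
      have hbO : f^[j + 1] x ∈ O := hiterO x hx (j + 1)
      refine ⟨?_, hbO, ?_, ?_⟩
      · intro heq
        have h0 : f^[j + 1] x = f^[0] x := by simpa using heq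
        have := hinj x hx (j + 1) 0 (by omega) (by omega) h0
        omega
      · have hdropeq : (List.range (m0 (f^[j + 1] x) + 1)).map (fun i => f^[i] (f^[j + 1] x)) =
            ((List.range (m0 x + 1)).map (fun i => f^[i] x)).drop (j + 1) := by
          apply List.ext_getElem
          · rw [hlen, List.length_drop, hlen, hm0shift x hx (j + 1) (by omega)]
            omega
          · intro i h1 h2
            rw [List.getElem_drop]
            simp only [List.getElem_map, List.getElem_range]
            rw [← Function.iterate_add_apply]
            congr 1
            omega
        rw [hdropeq]
        exact (List.drop_suffix _ _).reverse
      · intro hsb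
        have hj1 : j + 1 < m0 x := by
          rcases Nat.lt_or_ge (j + 1) (m0 x) with h | h
          · exact h
          · exfalso
            have heq : j + 1 = m0 x := by omega
            rw [heq] at hsb
            exact hsb (hm0sink x hx)
        rw [hmemtail]
        exact ⟨j + 1, hj1, Function.iterate_succ_apply' f (j + 1) x⟩
  exact ⟨f, fun x => (List.range (m0 x + 1)).map (fun j => f^[j] x), hf,
    fun x => ⟨_, hhead x⟩, hmain⟩

end Stage1
section ListLexAux

variable {α : Type*} [LinearOrder α]

private lemma lex_of_ne_prefix : ∀ {s t : List α}, s <+: t → s ≠ t → List.Lex (· < ·) s t := by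
  intro s
  induction s with
  | nil =>
    intro t _ hne
    cases t with
    | nil => exact absurd rfl hne
    | cons a t => exact List.Lex.nil
  | cons a s ih =>
    intro t hpre hne
    cases t with
    | nil => exact absurd (List.prefix_nil.mp hpre) (by simp)
    | cons b t =>
      obtain ⟨rfl, h⟩ := List.cons_prefix_cons.mp hpre
      exact List.Lex.cons (ih h (fun e => hne (by rw [e])))

private lemma prefix_of_between : ∀ {s t u : List α}, s <+: u →
    (List.Lex (· < ·) s t ∨ s = t) → (List.Lex (· < ·) t u ∨ t = u) → s <+: t := by
  intro s
  induction s with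
  | nil => intro t u _ _ _; exact List.nil_prefix
  | cons a s ih =>
    intro t u hsu hst htu
    rcases hst with hst | rfl
    · rcases htu with htu | rfl
      · cases t with
        | nil => cases hst
        | cons b t =>
          cases u with
          | nil => cases htu
          | cons c u =>
            obtain ⟨rfl, hsu'⟩ := List.cons_prefix_cons.mp hsu
            cases hst with
            | cons hst' =>
              cases htu with
              | cons htu' =>
                exact List.cons_prefix_cons.mpr ⟨rfl, ih hsu' (Or.inl hst') (Or.inl htu')⟩
              | rel h => exact absurd h (lt_irrefl _)
            | rel h =>
              cases htu with
              | cons htu' => exact absurd h (lt_irrefl _)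
              | rel h' => exact absurd (h.trans h') (lt_irrefl _)
      · exact hsu
    · exact List.prefix_rfl

private lemma prefix_of_map_prefix {β : Type*} {g : β → α} (hg : Function.Injective g)
    {s t : List β} (h : s.map g <+: t.map g) : s <+: t := by
  have h2 := List.prefix_iff_eq_take.mp h
  rw [List.length_map, ← List.map_take] at h2
  have h3 : s = t.take s.length := List.map_injective_iff.mpr hg h2
  rw [h3]
  exact List.take_prefix _ _

end ListLexAux


/-- Decomposition lemma: a viable set `O` of size at most `k` in a DAG of
truncated depth `d` can be decomposed into `⌈k/p⌉` pairs `(O_i, B_i)` with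
`O = ⋃ O_i` (disjointly), `O_i ∪ B_i` viable, `|O_i| ≤ p`, `|B_i| ≤ d - 1`,
and `∑ |O_i ∪ B_i| ≤ (k/p)·(p + d - 1)`. -/
theorem decomposition_lemma {X : Type*} [Fintype X] [DecidableEq X]
    (E : X → X → Prop)
    (hacyc : ∀ x, ¬ Relation.TransGen E x x)
    (k p d : ℕ) (hp : 1 ≤ p) (hpk : p ≤ k) (hdk : d ≤ k) (hd1 : 1 ≤ d)
    (hdepth : ∀ l : List X, l.Chain' E →
      (∃ x, l.getLast? = some x ∧ IsSink E x) → min k l.length ≤ d)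
    (O : Finset X) (hOviable : Viable E O) (hOcard : O.card ≤ k) :
    ∃ (Os Bs : Fin ((k + p - 1) / p) → Finset X),
      O = Finset.univ.biUnion Os ∧
      (∀ i j, i ≠ j → Disjoint (Os i) (Os j)) ∧
      (∀ i, Viable E (Os i ∪ Bs i)) ∧
      (∀ i, (Os i).card ≤ p) ∧
      (∀ i, (Bs i).card ≤ d - 1) ∧
      (∑ i, ((Os i ∪ Bs i).card : ℝ)) ≤ (k : ℝ) / p * (p + d - 1) := by
  classical
  obtain ⟨f, chain, hf, hchainhead, hchain⟩ :=
    exists_chain_system hacyc k d hdepth O hOviable hOcard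
  set n := (k + p - 1) / p with hn
  have hppos : 0 < p := hp
  have hk1 : 1 ≤ k := le_trans hp hpk
  have hn1 : n = (k - 1) / p + 1 := by
    rw [hn]
    have h : k + p - 1 = (k - 1) + p := by omega
    rw [h, Nat.add_div_right _ hppos]
  have hnpos : 0 < n := hn1 ▸ Nat.succ_pos _
  have hkn : k ≤ n * p := by
    have h1 := Nat.div_add_mod (k - 1) p
    have h2 := Nat.mod_lt (k - 1) hppos
    rw [hn1, Nat.add_mul, Nat.one_mul, Nat.mul_comm]
    omega
  have hdivmul : ∀ j : ℕ, j / p * p ≤ j ∧ j < j / p * p + p := by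
    intro j
    have h1 := Nat.div_add_mod j p
    have h2 := Nat.mod_lt j hppos
    have h3 : j / p * p = p * (j / p) := Nat.mul_comm _ _
    omega
  -- the key function
  have hg : Function.Injective (Fintype.equivFin X) := (Fintype.equivFin X).injective
  obtain ⟨key, hkey⟩ : ∃ key : X → List (Fin (Fintype.card X)),
      ∀ x, key x = ((chain x).reverse).map (Fintype.equivFin X) := ⟨_, fun _ => rfl⟩
  have hkeyinj : Function.Injective key := by
    intro x y hxy
    rw [hkey, hkey] at hxy
    have h1 : (chain x).reverse = (chain y).reverse := List.map_injective_iff.mpr hg hxy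
    rw [List.reverse_inj] at h1
    obtain ⟨t1, e1⟩ := hchainhead x
    obtain ⟨t2, e2⟩ := hchainhead y
    rw [e1, e2] at h1
    injection h1
  have hltAsymm : IsAsymm (List (Fin (Fintype.card X))) (List.Lex (· < ·)) := inferInstance
  have hltTrans : IsTrans (List (Fin (Fintype.card X))) (List.Lex (· < ·)) :=
    ⟨fun _ _ _ h1 h2 => List.lex_trans (fun h₁ h₂ => lt_trans h₁ h₂) h1 h2⟩
  have hltTrich : IsTrichotomous (List (Fin (Fintype.card X))) (List.Lex (· < ·)) := inferInstance
  obtain ⟨rle, hrle⟩ : ∃ r : X → X → Prop,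
      ∀ a b, r a b ↔ (List.Lex (· < ·) (key a) (key b) ∨ a = b) := ⟨_, fun _ _ => Iff.rfl⟩
  haveI : DecidableRel rle := fun a b => decidable_of_iff _ (hrle a b).symm
  haveI : IsTrans X rle := by
    constructor
    intro a b c hab hbc
    rw [hrle] at hab hbc ⊢
    rcases hab with hab | rfl
    · rcases hbc with hbc | rfl
      · exact Or.inl (hltTrans.trans _ _ _ hab hbc)
      · exact Or.inl hab
    · exact hbc
  haveI : IsAntisymm X rle := by
    constructor
    intro a b hab hba
    rw [hrle] at hab hba
    rcases hab with hab | rfl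
    · rcases hba with hba | rfl
      · exact absurd hba (hltAsymm.asymm _ _ hab)
      · rfl
    · rfl
  haveI : IsTotal X rle := by
    constructor
    intro a b
    rcases trichotomous (r := List.Lex (· < ·)) (key a) (key b) with h | h | h
    · exact Or.inl ((hrle a b).mpr (Or.inl h))
    · exact Or.inl ((hrle a b).mpr (Or.inr (hkeyinj h)))
    · exact Or.inr ((hrle b a).mpr (Or.inl h))
  set L := Finset.sort O rle with hL
  have hLmem : ∀ x, x ∈ L ↔ x ∈ O := fun x => Finset.mem_sort rle
  have hLnodup : L.Nodup := Finset.sort_nodup O rle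
  have hLlen : L.length = O.card := Finset.length_sort rle
  have hLsorted : List.Pairwise rle L := Finset.pairwise_sort O rle
  have hmlen : L.length ≤ k := by rw [hLlen]; exact hOcard
  have hLpair : ∀ (j1 j2 : ℕ) (h1 : j1 < L.length) (h2 : j2 < L.length), j1 < j2 →
      rle L[j1] L[j2] := by
    intro j1 j2 h1 h2 hlt
    have := List.pairwise_iff_get.mp hLsorted ⟨j1, h1⟩ ⟨j2, h2⟩ hlt
    simpa [List.get_eq_getElem] using this
  have hidxlt : ∀ (j1 j2 : ℕ) (h1 : j1 < L.length) (h2 : j2 < L.length),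
      List.Lex (· < ·) (key L[j1]) (key L[j2]) → j1 < j2 := by
    intro j1 j2 h1 h2 hlex
    by_contra hcon
    push_neg at hcon
    rcases Nat.lt_or_ge j2 j1 with h | h
    · have := hLpair j2 j1 h2 h1 h
      rw [hrle] at this
      rcases this with h' | h'
      · exact hltAsymm.asymm _ _ hlex h'
      · rw [h'] at hlex
        exact hltAsymm.asymm _ _ hlex hlex
    · have hj : j1 = j2 := by omega
      subst hj
      exact hltAsymm.asymm _ _ hlex hlex
  -- the blocks
  set Os : Fin n → Finset X := fun i => ((L.drop (i.1 * p)).take p).toFinset with hOsdef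
  set Bs : Fin n → Finset X :=
    fun i => ((Os i).biUnion fun x => (chain x).tail.toFinset) \ Os i with hBsdef
  have hOsmem : ∀ (i : Fin n) (x : X), x ∈ Os i ↔
      ∃ (j : ℕ) (hj : j < L.length), i.1 * p ≤ j ∧ j < i.1 * p + p ∧ L[j] = x := by
    intro i x
    simp only [hOsdef, List.mem_toFinset]
    rw [List.mem_iff_getElem]
    constructor
    · rintro ⟨a, ha, rfl⟩
      have hlt : (List.take p (List.drop (i.1 * p) L)).length = min p (L.length - i.1 * p) := by
        simp
      rw [hlt] at ha
      refine ⟨i.1 * p + a, by omega, by omega, by omega, ?_⟩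
      rw [List.getElem_take, List.getElem_drop]
    · rintro ⟨j, hj, h1, h2, rfl⟩
      have hlt : (List.take p (List.drop (i.1 * p) L)).length = min p (L.length - i.1 * p) := by
        simp
      refine ⟨j - i.1 * p, by rw [hlt]; omega, ?_⟩
      rw [List.getElem_take, List.getElem_drop]
      congr 1
      omega
  have hblock : ∀ (j : ℕ) (hj : j < L.length) (i : Fin n), i.1 * p ≤ j → j < i.1 * p + p →
      L[j] ∈ Os i := by
    intro j hj i h1 h2
    exact (hOsmem i _).mpr ⟨j, hj, h1, h2, rfl⟩
  have hOsub : ∀ i : Fin n, Os i ⊆ O := by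
    intro i x hx
    obtain ⟨j, hj, _, _, rfl⟩ := (hOsmem i x).mp hx
    exact (hLmem _).mp (List.getElem_mem hj)
  -- O is the disjoint union of the blocks
  have hOeq : O = Finset.univ.biUnion Os := by
    ext x
    simp only [Finset.mem_biUnion, Finset.mem_univ, true_and]
    constructor
    · intro hx
      have hxL : x ∈ L := (hLmem x).mpr hx
      obtain ⟨j, hj, rfl⟩ := List.mem_iff_getElem.mp hxL
      have hjn : j / p < n := by
        rw [Nat.div_lt_iff_lt_mul hppos]
        omega
      refine ⟨⟨j / p, hjn⟩, hblock j hj _ ?_ ?_⟩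
      · exact (hdivmul j).1
      · exact (hdivmul j).2
    · rintro ⟨i, hxi⟩
      exact hOsub i hxi
  have hdisj : ∀ i j : Fin n, i ≠ j → Disjoint (Os i) (Os j) := by
    intro i j hne
    rw [Finset.disjoint_left]
    intro x hxi hxj
    obtain ⟨j1, hj1, ha1, hb1, he1⟩ := (hOsmem i x).mp hxi
    obtain ⟨j2, hj2, ha2, hb2, he2⟩ := (hOsmem j x).mp hxj
    have heq : j1 = j2 := by
      rw [← he2] at he1
      exact (hLnodup.getElem_inj_iff).mp he1
    subst heq
    have h1 : j1 / p = i.1 := Nat.div_eq_of_lt_le ha1 (by rw [Nat.succ_mul]; omega)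
    have h2 : j1 / p = j.1 := Nat.div_eq_of_lt_le ha2 (by rw [Nat.succ_mul]; omega)
    exact hne (Fin.ext (by omega))
  -- viability
  have hviable : ∀ i, Viable E (Os i ∪ Bs i) := by
    intro i s hs
    rw [Finset.mem_union] at hs
    rcases hs with hs | hs
    · have hsO : s ∈ O := hOsub i hs
      by_cases hsink : IsSink E s
      · exact Or.inl hsink
      · right
        refine ⟨f s, ?_, (hf s hsO).2 hsink⟩
        rw [Finset.mem_union]
        have hfs : f s ∈ (chain s).tail := (hchain s hsO).2.2.1 hsink
        by_cases hin : f s ∈ Os i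
        · exact Or.inl hin
        · refine Or.inr (Finset.mem_sdiff.mpr ⟨?_, hin⟩)
          exact Finset.mem_biUnion.mpr ⟨s, hs, List.mem_toFinset.mpr hfs⟩
    · simp only [hBsdef, Finset.mem_sdiff, Finset.mem_biUnion] at hs
      obtain ⟨⟨x, hxOs, hsx⟩, hnot⟩ := hs
      rw [List.mem_toFinset] at hsx
      have hxO : x ∈ O := hOsub i hxOs
      obtain ⟨hne, hsO, hpre, hclose⟩ := (hchain x hxO).2.2.2 s hsx
      by_cases hsink : IsSink E s
      · exact Or.inl hsink
      · right
        refine ⟨f s, ?_, (hf s hsO).2 hsink⟩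
        rw [Finset.mem_union]
        have hfs : f s ∈ (chain x).tail := hclose hsink
        by_cases hin : f s ∈ Os i
        · exact Or.inl hin
        · refine Or.inr (Finset.mem_sdiff.mpr ⟨?_, hin⟩)
          exact Finset.mem_biUnion.mpr ⟨x, hxOs, List.mem_toFinset.mpr hfs⟩
  -- block size
  have hOscard : ∀ i, (Os i).card ≤ p := by
    intro i
    simp only [hOsdef]
    exact (List.toFinset_card_le _).trans (List.length_take_le _ _)
  -- B_i is contained in the ancestor chain of the first element of the block
  have hBsub : ∀ i : Fin n, (Os i).Nonempty →
      ∃ y ∈ O, Bs i ⊆ (chain y).tail.toFinset ∧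
        (i.1 = 0 → Bs i = ∅) := by
    intro i hne
    obtain ⟨x0, hx0⟩ := hne
    obtain ⟨j0, hj0, hge0, hlt0, he0⟩ := (hOsmem i x0).mp hx0
    have hstart : i.1 * p < L.length := by omega
    have hyOs : L[i.1 * p] ∈ Os i := hblock _ hstart i le_rfl (by omega)
    have hyO : L[i.1 * p] ∈ O := hOsub i hyOs
    have hkeysub : ∀ b ∈ Bs i, key b <+: key L[i.1 * p] ∧ b ∈ O ∧ b ∉ Os i := by
      intro b hb
      simp only [hBsdef, Finset.mem_sdiff, Finset.mem_biUnion] at hb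
      obtain ⟨⟨x, hxOs, hbx⟩, hbnot⟩ := hb
      rw [List.mem_toFinset] at hbx
      have hxO : x ∈ O := hOsub i hxOs
      obtain ⟨hbnex, hbO, hbpre, _⟩ := (hchain x hxO).2.2.2 b hbx
      have hkpre : key b <+: key x := by
        rw [hkey, hkey]
        exact hbpre.map _
      have hklex : List.Lex (· < ·) (key b) (key x) :=
        lex_of_ne_prefix hkpre (fun e => hbnex (hkeyinj e))
      obtain ⟨jb, hjb, hjbeq⟩ := List.mem_iff_getElem.mp ((hLmem b).mpr hbO)
      obtain ⟨jx, hjx, hgex, hltx, hjxeq⟩ := (hOsmem i x).mp hxOs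
      have hjblt : jb < jx := by
        apply hidxlt jb jx hjb hjx
        rw [hjbeq, hjxeq]
        exact hklex
      have hjbsmall : jb < i.1 * p := by
        by_contra hcon
        push_neg at hcon
        exact hbnot (hjbeq ▸ hblock jb hjb i hcon (by omega))
      have h1 : rle b L[i.1 * p] := by
        rw [← hjbeq]
        exact hLpair jb (i.1 * p) hjb hstart hjbsmall
      have h2 : rle L[i.1 * p] x := by
        rcases Nat.lt_or_ge (i.1 * p) jx with h | h
        · rw [← hjxeq]
          exact hLpair _ jx hstart hjx h
        · have hjxe : jx = i.1 * p := by omega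
          subst hjxe
          rw [hrle]
          exact Or.inr hjxeq
      refine ⟨?_, hbO, hbnot⟩
      apply prefix_of_between hkpre
      · exact ((hrle _ _).mp h1).imp id (congrArg key)
      · exact ((hrle _ _).mp h2).imp id (congrArg key)
    refine ⟨L[i.1 * p], hyO, ?_, ?_⟩
    · intro b hb
      obtain ⟨hkpre, hbO, hbnot⟩ := hkeysub b hb
      have hprey : (chain b).reverse <+: (chain L[i.1 * p]).reverse := by
        rw [hkey, hkey] at hkpre
        exact prefix_of_map_prefix hg hkpre
      have hbchain : b ∈ chain L[i.1 * p] := by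
        have hbb : b ∈ (chain b).reverse := by
          obtain ⟨t, e⟩ := hchainhead b
          rw [e]
          simp
        have := hprey.sublist.subset hbb
        exact List.mem_reverse.mp this
      have hbney : b ≠ L[i.1 * p] := fun e => hbnot (e ▸ hyOs)
      obtain ⟨t, ey⟩ := hchainhead L[i.1 * p]
      rw [ey] at hbchain
      rcases List.mem_cons.mp hbchain with e | htl
      · exact absurd e hbney
      · rw [List.mem_toFinset, ey]
        exact htl
    · intro hi0
      rw [Finset.eq_empty_iff_forall_notMem]
      intro b hb
      obtain ⟨hkpre, hbO, hbnot⟩ := hkeysub b hb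
      simp only [hBsdef, Finset.mem_sdiff, Finset.mem_biUnion] at hb
      obtain ⟨⟨x, hxOs, hbx⟩, hbnot'⟩ := hb
      rw [List.mem_toFinset] at hbx
      have hxO : x ∈ O := hOsub i hxOs
      obtain ⟨hbnex, hbO', hbpre, _⟩ := (hchain x hxO).2.2.2 b hbx
      have hklex : List.Lex (· < ·) (key b) (key x) :=
        lex_of_ne_prefix (by rw [hkey, hkey]; exact hbpre.map _)
          (fun e => hbnex (hkeyinj e))
      obtain ⟨jb, hjb, hjbeq⟩ := List.mem_iff_getElem.mp ((hLmem b).mpr hbO')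
      obtain ⟨jx, hjx, hgex, hltx, hjxeq⟩ := (hOsmem i x).mp hxOs
      have hjblt : jb < jx := by
        apply hidxlt jb jx hjb hjx
        rw [hjbeq, hjxeq]
        exact hklex
      apply hbnot'
      rw [← hjbeq]
      have h0 : i.1 * p = 0 := by rw [hi0, Nat.zero_mul]
      exact hblock jb hjb i (by omega) (by omega)
  have hBscard : ∀ i, (Bs i).card ≤ d - 1 := by
    intro i
    by_cases hne : (Os i).Nonempty
    · obtain ⟨y, hyO, hsub, _⟩ := hBsub i hne
      have h1 : (Bs i).card ≤ (chain y).tail.toFinset.card := Finset.card_le_card hsub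
      have h2 : (chain y).tail.toFinset.card ≤ (chain y).tail.length := List.toFinset_card_le _
      have h3 : (chain y).tail.length = (chain y).length - 1 := List.length_tail
      have h4 : (chain y).length ≤ d := (hchain y hyO).2.1
      omega
    · rw [Finset.not_nonempty_iff_eq_empty] at hne
      simp [hBsdef, hne]
  -- the first block has no B-part
  have hi0 : ∀ i : Fin n, i.1 = 0 → Bs i = ∅ := by
    intro i hi
    by_cases hne : (Os i).Nonempty
    · obtain ⟨_, _, _, h⟩ := hBsub i hne
      exact h hi
    · rw [Finset.not_nonempty_iff_eq_empty] at hne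
      simp [hBsdef, hne]
  -- sum bound
  have hcardunion : ∀ i, (Os i ∪ Bs i).card = (Os i).card + (Bs i).card := by
    intro i
    apply Finset.card_union_of_disjoint
    simp only [hBsdef]
    exact Finset.sdiff_disjoint.symm
  have hsumOs : ∑ i, (Os i).card = O.card := by
    rw [hOeq, Finset.card_biUnion]
    intro x _ y _ hxy
    exact hdisj x y hxy
  have hsumBs : ∑ i, (Bs i).card ≤ (n - 1) * (d - 1) := by
    have i0 : Fin n := ⟨0, hnpos⟩
    rw [← Finset.add_sum_erase _ _ (Finset.mem_univ (⟨0, hnpos⟩ : Fin n))]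
    rw [hi0 ⟨0, hnpos⟩ rfl]
    simp only [Finset.card_empty, zero_add]
    have := Finset.sum_le_card_nsmul (Finset.univ.erase (⟨0, hnpos⟩ : Fin n))
      (fun i => (Bs i).card) (d - 1) (fun i _ => hBscard i)
    rw [smul_eq_mul] at this
    have hcard : (Finset.univ.erase (⟨0, hnpos⟩ : Fin n)).card = n - 1 := by
      rw [Finset.card_erase_of_mem (Finset.mem_univ _), Finset.card_univ, Fintype.card_fin]
    rw [hcard] at this
    exact this
  -- final real arithmetic
  refine ⟨Os, Bs, hOeq, hdisj, hviable, hOscard, hBscard, ?_⟩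
  have hnat : ∑ i, (Os i ∪ Bs i).card = ∑ i, (Os i).card + ∑ i, (Bs i).card := by
    rw [← Finset.sum_add_distrib]
    exact Finset.sum_congr rfl (fun i _ => hcardunion i)
  have hstep1 : ∑ i, ((Os i ∪ Bs i).card : ℝ) =
      ((∑ i, (Os i).card : ℕ) : ℝ) + ((∑ i, (Bs i).card : ℕ) : ℝ) := by
    exact_mod_cast congrArg (Nat.cast : ℕ → ℝ) hnat
  rw [hstep1, hsumOs]
  have hp' : (0 : ℝ) < p := by exact_mod_cast hppos
  have hnmul : (n - 1) * p ≤ k := by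
    rw [hn1, Nat.add_sub_cancel]
    exact (Nat.div_mul_le_self (k - 1) p).trans (by omega)
  have hc1 : ((n - 1 : ℕ) : ℝ) = (n : ℝ) - 1 := by
    have h : (1 : ℕ) ≤ n := hnpos
    push_cast [h]
    ring
  have hc2 : ((d - 1 : ℕ) : ℝ) = (d : ℝ) - 1 := by
    push_cast [hd1]
    ring
  have hA : ((n : ℝ) - 1) * p ≤ k := by
    rw [← hc1]
    exact_mod_cast hnmul
  have hd' : (1 : ℝ) ≤ d := by exact_mod_cast hd1
  have hBcast : ((∑ i, (Bs i).card : ℕ) : ℝ) ≤ ((n : ℝ) - 1) * ((d : ℝ) - 1) := by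
    rw [← hc1, ← hc2, ← Nat.cast_mul]
    exact_mod_cast hsumBs
  have h1 : (n : ℝ) - 1 ≤ (k : ℝ) / p := (le_div_iff₀ hp').mpr hA
  have h3 : ((n : ℝ) - 1) * ((d : ℝ) - 1) ≤ (k : ℝ) / p * ((d : ℝ) - 1) :=
    mul_le_mul_of_nonneg_right h1 (by linarith)
  have h4 : (k : ℝ) / p * ((p : ℝ) + d - 1) = k + (k : ℝ) / p * ((d : ℝ) - 1) := by
    field_simp
    ring
  have hOk : (O.card : ℝ) ≤ k := by exact_mod_cast hOcard
  rw [h4]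
  linarith
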